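/- Suppose for each l ≤ r there is a color ρ_l, and suppose sets A_0, ..., A_{r−1} ⊆ ω₁ each of order type ω+1 (with top elements α^i_ω) are such that every index-strictly-increasing l-canonical tuple from ⟨A_i⟩ gets color ρ_l under d_l, for every l ≤ r. If ρ_{l'} = ρ_l = ρ for some l' < l ≤ r, then setting x_i = (1/2)·(s_{l'} * ā_i), where ā_i consists of the pairs {α^k_k, α^k_ω} for k < l', the singletons {α^k_{k + i(l−l')}} for l' ≤ k < l, and the singletons {α^k_ω} for l ≤ k < r, the set X = {x_i : i ∈ ω} satisfies f(x + y) = ρ for all x, y ∈ X (repetitions allowed). In particular, for i < j, the tuple b̄_{i,j} consisting of pairs {α^k_k, α^k_ω} for k < l', pairs {α^k_{k+i(l−l')}, α^k_{k+j(l−l')}} for l' ≤ k < l, and singletons {α^k_ω} for l ≤ k < r, is an index-strictly-increasing l-canonical tuple and x_i + x_j = s_l * b̄_{i,j}, while ā_i is an index-strictly-increasing l'-canonical tuple with 2x_i = s_{l'} * ā_i. -/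
import Mathlib


/-- The star operation: `star s a` sends `a m` to `s m` and is `0` elsewhere. -/
noncomputable def star {k : ℕ} (s : Fin k → ℚ) (a : Fin k → Ordinal) : Ordinal →₀ ℚ :=
  ∑ m, Finsupp.single (a m) (s m)

/-- The string `s_{r,l}` of length `r + l`: `2l` many `2`'s followed by
`r − l` many `4`'s. -/
def sStr (r l : ℕ) : Fin (r + l) → ℚ := fun m => if (m : ℕ) < 2 * l then 2 else 4

/-- An `l`-canonical tuple from the blocks `A_k = {α k p : p ∈ ℕ∞}` (with
`α k ⊤` the top element `α^k_ω`), determined by index functions `i` (first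
element of each block) and `i'` (second element of blocks `k < l`): position
`m < 2l` holds the `i (m/2)`-th or `i' (m/2)`-th element of block `m/2` by
parity, and position `m ≥ 2l` holds the `i (m−l)`-th element of block `m−l`. -/
def canonTup (l : ℕ) (α : ℕ → ℕ∞ → Ordinal) (i i' : ℕ → ℕ∞) : ℕ → Ordinal := fun m =>
  if m < 2 * l then (if m % 2 = 0 then α (m / 2) (i (m / 2)) else α (m / 2) (i' (m / 2)))
  else α (m - l) (i (m - l))

/-- `l`-canonicity of the indices: `i_k < i'_k` for `k < l`, and every finite
first index `i_m` (`m < r`) is below every second index `i'_k` (`k < l`). -/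
def IsCanonical (r l : ℕ) (i i' : ℕ → ℕ∞) : Prop :=
  (∀ k < l, i k < i' k) ∧ (∀ k < l, ∀ m < r, i m ≠ ⊤ → i m < i' k)

/-- Index-strict-increasingness: the first indices are weakly increasing, and
strictly increasing among the finite ones. -/
def IndexStrictIncr (r : ℕ) (i : ℕ → ℕ∞) : Prop :=
  ∀ k k', k < k' → k' < r → i k ≤ i k' ∧ (i k ≠ ⊤ → i k < i k')

/-- First indices of the tuple `ā_i`: `k` for `k < l'`, `k + i(l−l')` for
`l' ≤ k < l`, and `ω` (i.e. `⊤`) for `l ≤ k`. -/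
def idxA (l' l : ℕ) (i : ℕ) : ℕ → ℕ∞ := fun k =>
  if k < l' then (k : ℕ∞) else if k < l then ((k + i * (l - l') : ℕ) : ℕ∞) else ⊤

/-- Second indices of the tuple `b̄_{i,j}`: `ω` for `k < l'` and `k + j(l−l')`
for `l' ≤ k < l`. -/
def idxB (l' l : ℕ) (j : ℕ) : ℕ → ℕ∞ := fun k =>
  if k < l' then ⊤ else ((k + j * (l - l') : ℕ) : ℕ∞)

/-- `x_i = (1/2)·(s_{l'} * ā_i)`, where `ā_i` is the `l'`-canonical tuple with
pairs `{α^k_k, α^k_ω}` for `k < l'`, singletons `{α^k_{k+i(l−l')}}` for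
`l' ≤ k < l`, and singletons `{α^k_ω}` for `l ≤ k < r`. -/
noncomputable def xVec (r l l' : ℕ) (α : ℕ → ℕ∞ → Ordinal) (i : ℕ) : Ordinal →₀ ℚ :=
  (2 : ℚ)⁻¹ • star (sStr r l') (fun m : Fin (r + l') => canonTup l' α (idxA l' l i) (fun _ => ⊤) m)

/- ### Auxiliary lemmas -/

lemma aux_sum_range_pair {M : Type*} [AddCommMonoid M] (g : ℕ → M) (l : ℕ) :
    ∑ m ∈ Finset.range (2 * l), g m = ∑ k ∈ Finset.range l, (g (2 * k) + g (2 * k + 1)) := by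
  induction l with
  | zero => simp
  | succ n ih =>
      rw [show 2 * (n + 1) = (2 * n + 1) + 1 by omega, Finset.sum_range_succ,
        Finset.sum_range_succ, Finset.sum_range_succ, ih, add_assoc]

/-- The star of a canonical tuple, block by block. -/
lemma aux_starA (r l : ℕ) (hl : l ≤ r) (α : ℕ → ℕ∞ → Ordinal) (i i' : ℕ → ℕ∞) :
    star (sStr r l) (fun m : Fin (r + l) => canonTup l α i i' m) =
      (∑ k ∈ Finset.range l,
        (Finsupp.single (α k (i k)) (2:ℚ) + Finsupp.single (α k (i' k)) 2))
      + ∑ k ∈ Finset.Ico l r, Finsupp.single (α k (i k)) 4 := by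
  unfold _root_.star sStr
  rw [Fin.sum_univ_eq_sum_range
    (fun m => Finsupp.single (canonTup l α i i' m) (if m < 2 * l then (2:ℚ) else 4))]
  rw [Finset.range_eq_Ico, ← Finset.sum_Ico_consecutive _ (Nat.zero_le (2*l)) (by omega),
    ← Finset.range_eq_Ico, aux_sum_range_pair]
  congr 1
  · refine Finset.sum_congr rfl fun k hk => ?_
    simp only [Finset.mem_range] at hk
    have h1 : 2 * k < 2 * l := by omega
    have h2 : 2 * k + 1 < 2 * l := by omega
    simp [canonTup, h1, h2, (by omega : 2*k % 2 = 0), (by omega : (2*k+1) % 2 = 1),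
      (by omega : 2*k/2 = k), (by omega : (2*k+1)/2 = k)]
  · rw [Finset.sum_Ico_eq_sum_range, Finset.sum_Ico_eq_sum_range,
      show r + l - 2*l = r - l by omega]
    refine Finset.sum_congr rfl fun t ht => ?_
    simp only [Finset.mem_range] at ht
    have h3 : ¬ (2*l + t < 2 * l) := by omega
    simp [canonTup, h3, (by omega : 2*l + t - l = l + t)]

/-- The star of the tuple `ā_i`, explicitly. -/
lemma aux_starX (r l l' : ℕ) (hl' : l' < l) (hl : l ≤ r) (α : ℕ → ℕ∞ → Ordinal) (i : ℕ) :
    star (sStr r l') (fun m : Fin (r + l') => canonTup l' α (idxA l' l i) (fun _ => ⊤) m) =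
      (∑ k ∈ Finset.range l',
        (Finsupp.single (α k (k : ℕ∞)) (2:ℚ) + Finsupp.single (α k ⊤) 2))
      + ((∑ k ∈ Finset.Ico l' l,
          Finsupp.single (α k ((k + i * (l - l') : ℕ) : ℕ∞)) (4:ℚ))
        + ∑ k ∈ Finset.Ico l r, Finsupp.single (α k ⊤) (4:ℚ)) := by
  rw [aux_starA r l' (by omega)]
  congr 1
  · refine Finset.sum_congr rfl fun k hk => ?_
    simp only [Finset.mem_range] at hk
    simp [idxA, hk]
  · rw [← Finset.sum_Ico_consecutive _ (le_of_lt hl') hl]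
    congr 1 <;>
      refine Finset.sum_congr rfl fun k hk => ?_ <;>
      simp only [Finset.mem_Ico] at hk
    · have h1 : ¬ k < l' := by omega
      simp [idxA, hk.2, h1]
    · have h1 : ¬ k < l' := by omega
      have h2 : ¬ k < l := by omega
      simp [idxA, h1, h2]

/-- The star of the tuple `b̄_{i,j}`, explicitly. -/
lemma aux_starB (r l l' : ℕ) (hl' : l' < l) (hl : l ≤ r) (α : ℕ → ℕ∞ → Ordinal) (i j : ℕ) :
    star (sStr r l) (fun m : Fin (r + l) => canonTup l α (idxA l' l i) (idxB l' l j) m) =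
      (∑ k ∈ Finset.range l',
        (Finsupp.single (α k (k : ℕ∞)) (2:ℚ) + Finsupp.single (α k ⊤) 2))
      + ((∑ k ∈ Finset.Ico l' l,
          (Finsupp.single (α k ((k + i * (l - l') : ℕ) : ℕ∞)) (2:ℚ)
            + Finsupp.single (α k ((k + j * (l - l') : ℕ) : ℕ∞)) 2))
        + ∑ k ∈ Finset.Ico l r, Finsupp.single (α k ⊤) (4:ℚ)) := by
  rw [aux_starA r l hl, ← add_assoc]
  congr 1
  · rw [Finset.range_eq_Ico, ← Finset.sum_Ico_consecutive _ (Nat.zero_le l') (le_of_lt hl'),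
      ← Finset.range_eq_Ico]
    congr 1
    · refine Finset.sum_congr rfl fun k hk => ?_
      simp only [Finset.mem_range] at hk
      simp [idxA, idxB, hk]
    · refine Finset.sum_congr rfl fun k hk => ?_
      simp only [Finset.mem_Ico] at hk
      have h1 : ¬ k < l' := by omega
      simp [idxA, idxB, hk.2, h1]
  · refine Finset.sum_congr rfl fun k hk => ?_
    simp only [Finset.mem_Ico] at hk
    have h1 : ¬ k < l' := by omega
    have h2 : ¬ k < l := by omega
    simp [idxA, h1, h2]

/-- The key identity: `s_{l'} * ā_i + s_{l'} * ā_j = 2 • (s_l * b̄_{i,j})`. -/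
lemma aux_key (r l l' : ℕ) (hl' : l' < l) (hl : l ≤ r) (α : ℕ → ℕ∞ → Ordinal) (i j : ℕ) :
    star (sStr r l') (fun m : Fin (r + l') => canonTup l' α (idxA l' l i) (fun _ => ⊤) m)
      + star (sStr r l') (fun m : Fin (r + l') => canonTup l' α (idxA l' l j) (fun _ => ⊤) m)
      = (2:ℚ) • star (sStr r l) (fun m : Fin (r + l) =>
          canonTup l α (idxA l' l i) (idxB l' l j) m) := by
  rw [aux_starX r l l' hl' hl α i, aux_starX r l l' hl' hl α j,
    aux_starB r l l' hl' hl α i j, smul_add, smul_add]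
  have hE : (2:ℚ) • (∑ k ∈ Finset.Ico l' l,
      (Finsupp.single (α k ((k + i * (l - l') : ℕ) : ℕ∞)) (2:ℚ)
        + Finsupp.single (α k ((k + j * (l - l') : ℕ) : ℕ∞)) 2)) =
      (∑ k ∈ Finset.Ico l' l, Finsupp.single (α k ((k + i * (l - l') : ℕ) : ℕ∞)) (4:ℚ))
      + ∑ k ∈ Finset.Ico l' l, Finsupp.single (α k ((k + j * (l - l') : ℕ) : ℕ∞)) (4:ℚ) := by
    rw [Finset.smul_sum, ← Finset.sum_add_distrib]
    refine Finset.sum_congr rfl fun k _ => ?_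
    rw [smul_add, Finsupp.smul_single, Finsupp.smul_single]
    norm_num
  rw [hE, two_smul ℚ, two_smul ℚ]
  abel

/-- `ā_i` is `l'`-canonical. -/
lemma aux_canA (r l l' : ℕ) (i : ℕ) : IsCanonical r l' (idxA l' l i) (fun _ => ⊤) := by
  constructor
  · intro k hk
    simp [idxA, hk]
  · intro k hk m hm hne
    exact hne.lt_top

/-- `ā_i` is index-strictly-increasing. -/
lemma aux_incrA (r l l' : ℕ) (hl' : l' < l) (i : ℕ) : IndexStrictIncr r (idxA l' l i) := by
  intro k k' hkk hk'r
  simp only [idxA]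
  split_ifs with h1 h2 h3 h4 h5 <;>
    refine ⟨?_, fun hne => ?_⟩ <;>
    first
      | exact le_top
      | exact absurd rfl hne
      | (rw [Nat.cast_le]; omega)
      | (rw [Nat.cast_lt]; omega)
      | exact (WithTop.coe_lt_top _)
      | omega

/-- `b̄_{i,j}` is `l`-canonical for `i < j`. -/
lemma aux_canB (r l l' : ℕ) (hl' : l' < l) (hl : l ≤ r) (i j : ℕ) (hij : i < j) :
    IsCanonical r l (idxA l' l i) (idxB l' l j) := by
  have hmul : i * (l - l') + (l - l') ≤ j * (l - l') := by
    have h1 : (i + 1) * (l - l') ≤ j * (l - l') := Nat.mul_le_mul_right _ (by omega)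
    rw [add_one_mul] at h1; exact h1
  constructor
  · intro k hk
    simp only [idxA, idxB]
    split_ifs with h1 <;>
      first
        | exact (WithTop.coe_lt_top _)
        | (rw [Nat.cast_lt]; omega)
  · intro k hk m hm hne
    simp only [idxA, idxB] at *
    split_ifs at * with h1 h2 h3 <;>
      first
        | exact absurd rfl hne
        | exact (WithTop.coe_lt_top _)
        | (rw [Nat.cast_lt]; omega)
        | omega

/-- The final step of the proof: if every index-strictly-increasing
`l`-canonical tuple from the (ordered, order type `ω+1`, below `ω₁`) blocks
`⟨A_k : k < r⟩` gets color `ρ_l` under `d_l(ā) = f(s_l * ā)` for every `l ≤ r`,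
and `ρ_{l'} = ρ_l` for some `l' < l ≤ r`, then with `x_i = (1/2)·(s_{l'} * ā_i)`
as above: `ā_i` is an index-strictly-increasing `l'`-canonical tuple with
`2x_i = s_{l'} * ā_i`; for `i < j` the tuple `b̄_{i,j}` is an
index-strictly-increasing `l`-canonical tuple with `x_i + x_j = s_l * b̄_{i,j}`;
and `f(x + y) = ρ_{l'}` for all `x, y ∈ X = {x_i : i ∈ ω}`. -/
theorem stmt_15 (r l l' : ℕ) (hr : 2 ≤ r) (hl' : l' < l) (hl : l ≤ r)
    (α : ℕ → ℕ∞ → Ordinal)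
    (hmono : ∀ k, StrictMono (α k))
    (hblocks : ∀ k k' : ℕ, k < k' → ∀ p q : ℕ∞, α k p < α k' q)
    (hbound : ∀ k < r, ∀ p, α k p < (Cardinal.aleph 1).ord)
    (f : (Ordinal →₀ ℚ) → Fin r) (ρ : ℕ → Fin r)
    (hcol : ∀ lc ≤ r, ∀ i i' : ℕ → ℕ∞, IsCanonical r lc i i' → IndexStrictIncr r i →
      f (star (sStr r lc) (fun m : Fin (r + lc) => canonTup lc α i i' m)) = ρ lc)
    (hρ : ρ l' = ρ l) :
    (∀ i : ℕ, IsCanonical r l' (idxA l' l i) (fun _ => ⊤) ∧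
      IndexStrictIncr r (idxA l' l i) ∧
      (2 : ℚ) • xVec r l l' α i =
        star (sStr r l') (fun m : Fin (r + l') =>
          canonTup l' α (idxA l' l i) (fun _ => ⊤) m)) ∧
    (∀ i j : ℕ, i < j → IsCanonical r l (idxA l' l i) (idxB l' l j) ∧
      xVec r l l' α i + xVec r l l' α j =
        star (sStr r l) (fun m : Fin (r + l) =>
          canonTup l α (idxA l' l i) (idxB l' l j) m)) ∧
    (∀ a ∈ Set.range (xVec r l l' α), ∀ b ∈ Set.range (xVec r l l' α),
      f (a + b) = ρ l') := by
  have P1 : ∀ i : ℕ, IsCanonical r l' (idxA l' l i) (fun _ => ⊤) ∧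
      IndexStrictIncr r (idxA l' l i) ∧
      (2 : ℚ) • xVec r l l' α i =
        star (sStr r l') (fun m : Fin (r + l') =>
          canonTup l' α (idxA l' l i) (fun _ => ⊤) m) := by
    intro i
    refine ⟨aux_canA r l l' i, aux_incrA r l l' hl' i, ?_⟩
    unfold xVec
    rw [smul_smul]
    norm_num
  have P2 : ∀ i j : ℕ, i < j → IsCanonical r l (idxA l' l i) (idxB l' l j) ∧
      xVec r l l' α i + xVec r l l' α j =
        star (sStr r l) (fun m : Fin (r + l) =>
          canonTup l α (idxA l' l i) (idxB l' l j) m) := by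
    intro i j hij
    refine ⟨aux_canB r l l' hl' hl i j hij, ?_⟩
    apply smul_right_injective (Ordinal →₀ ℚ) (by norm_num : (2:ℚ) ≠ 0)
    show (2:ℚ) • _ = (2:ℚ) • _
    rw [smul_add, (P1 i).2.2, (P1 j).2.2, aux_key r l l' hl' hl α i j]
  refine ⟨P1, P2, ?_⟩
  rintro a ⟨i, rfl⟩ b ⟨j, rfl⟩
  rcases lt_trichotomy i j with h | h | h
  · rw [(P2 i j h).2, hρ]
    exact hcol l hl _ _ (P2 i j h).1 (P1 i).2.1
  · subst h
    rw [← two_smul ℚ, (P1 i).2.2]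
    exact hcol l' (by omega) _ _ (P1 i).1 (P1 i).2.1
  · rw [add_comm, (P2 j i h).2, hρ]
    exact hcol l hl _ _ (P2 j i h).1 (P1 j).2.1
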